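/- Let α, δ ∈ ℝ, β > 0, and let λ ≥ 0 satisfy λ = 0 if α² + 3βδ > 0 and λ > 2√(−(α² + 3βδ))/(3β) if α² + 3βδ ≤ 0. Define γ₁(m) := (α − √(3β²m² + α² + 3βδ))/(3β) + i·m for m ∈ [λ, ∞). Then: (a) Re(ω(γ₁(m))) = 0 for every m ≥ λ, so that τ(m) := i·ω(γ₁(m)) is real-valued; and (b) τ is strictly monotone increasing on [λ, ∞) with τ(m) → ∞ as m → ∞. -/

import Mathlib

open MeasureTheory

/-- The dispersion symbol `ω(k) = -iβk³ + iαk² + iδk`. -/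
noncomputable def omegaHNLS (α β δ : ℝ) (k : ℂ) : ℂ :=
  -Complex.I * (β : ℂ) * k ^ 3 + Complex.I * (α : ℂ) * k ^ 2 + Complex.I * (δ : ℂ) * k

/-- Parametrization of the left branch of `∂D⁺`:
`γ₁(m) = (α − √(3β²m² + α² + 3βδ))/(3β) + i m`. -/
noncomputable def gammaOne (α β δ : ℝ) (m : ℝ) : ℂ :=
  (((α - Real.sqrt (3 * β ^ 2 * m ^ 2 + α ^ 2 + 3 * β * δ)) / (3 * β) : ℝ) : ℂ)
    + Complex.I * (m : ℂ)

/-- The (real-valued) map `τ(m) = i·ω(γ₁(m))`, realized as the real part of `i·ω(γ₁(m))`. -/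
noncomputable def tauGammaOne (α β δ : ℝ) (m : ℝ) : ℝ :=
  (Complex.I * omegaHNLS α β δ (gammaOne α β δ m)).re

lemma omega_re_eq (α β δ : ℝ) (hβ : β ≠ 0) (m : ℝ)
    (h : 0 ≤ 3 * β ^ 2 * m ^ 2 + α ^ 2 + 3 * β * δ) :
    (omegaHNLS α β δ (gammaOne α β δ m)).re = 0 := by
  simp only [omegaHNLS, gammaOne]
  set u := Real.sqrt (3 * β ^ 2 * m ^ 2 + α ^ 2 + 3 * β * δ) with hudef
  have hu : u ^ 2 = 3 * β ^ 2 * m ^ 2 + α ^ 2 + 3 * β * δ := Real.sq_sqrt h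
  set x : ℝ := (α - u) / (3 * β) with hxdef
  simp [Complex.add_re, Complex.add_im, Complex.mul_re, Complex.mul_im,
    Complex.I_re, Complex.I_im, Complex.ofReal_re, Complex.ofReal_im,
    pow_succ, pow_zero]
  rw [hxdef]
  field_simp
  ring_nf
  linear_combination (3 * m) * hu

lemma tau_eq (α β δ : ℝ) (hβ : β ≠ 0) (m : ℝ)
    (h : 0 ≤ 3 * β ^ 2 * m ^ 2 + α ^ 2 + 3 * β * δ) :
    tauGammaOne α β δ m =
      (8 * (Real.sqrt (3 * β ^ 2 * m ^ 2 + α ^ 2 + 3 * β * δ)) ^ 3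
        - 6 * (α ^ 2 + 3 * β * δ) * Real.sqrt (3 * β ^ 2 * m ^ 2 + α ^ 2 + 3 * β * δ)
        + α ^ 3 - 3 * α * (α ^ 2 + 3 * β * δ)) / (27 * β ^ 2) := by
  simp only [tauGammaOne, omegaHNLS, gammaOne]
  set u := Real.sqrt (3 * β ^ 2 * m ^ 2 + α ^ 2 + 3 * β * δ) with hudef
  have hu : u ^ 2 = 3 * β ^ 2 * m ^ 2 + α ^ 2 + 3 * β * δ := Real.sq_sqrt h
  set x : ℝ := (α - u) / (3 * β) with hxdef
  simp [Complex.add_re, Complex.add_im, Complex.mul_re, Complex.mul_im,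
    Complex.I_re, Complex.I_im, Complex.ofReal_re, Complex.ofReal_im,
    pow_succ, pow_zero]
  rw [hxdef]
  field_simp
  ring_nf
  linear_combination (-243 * u) * hu

/-- (a) `ω` is purely imaginary along the left branch of `∂D⁺`, so `τ(m) = i·ω(γ₁(m))` is
real-valued; (b) `τ` is strictly monotone increasing on `[λ, ∞)` and `τ(m) → ∞` as `m → ∞`. -/
theorem tauGammaOne_real_strictMono_tendsto (α β δ : ℝ) (hβ : 0 < β) (lam : ℝ)
    (hlam0 : 0 ≤ lam)
    (hlam1 : 0 < α ^ 2 + 3 * β * δ → lam = 0)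
    (hlam2 : α ^ 2 + 3 * β * δ ≤ 0 →
      2 * Real.sqrt (-(α ^ 2 + 3 * β * δ)) / (3 * β) < lam) :
    (∀ m : ℝ, lam ≤ m → (omegaHNLS α β δ (gammaOne α β δ m)).re = 0) ∧
    StrictMonoOn (tauGammaOne α β δ) (Set.Ici lam) ∧
    Filter.Tendsto (tauGammaOne α β δ) Filter.atTop Filter.atTop := by
  have hβ' : β ≠ 0 := ne_of_gt hβ
  have hpos : ∀ m : ℝ, lam ≤ m → 0 < 3 * β ^ 2 * m ^ 2 + α ^ 2 + 3 * β * δ := by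
    intro m hm
    rcases lt_or_ge 0 (α ^ 2 + 3 * β * δ) with hcpos | hcle
    · nlinarith [sq_nonneg m, sq_nonneg (β * m)]
    · have h2 := hlam2 hcle
      have hs : Real.sqrt (-(α ^ 2 + 3 * β * δ)) ^ 2 = -(α ^ 2 + 3 * β * δ) :=
        Real.sq_sqrt (by linarith)
      have hs0 : 0 ≤ Real.sqrt (-(α ^ 2 + 3 * β * δ)) := Real.sqrt_nonneg _
      have h3 : 2 * Real.sqrt (-(α ^ 2 + 3 * β * δ)) < 3 * β * m := by
        have h4 := (div_lt_iff₀ (by positivity : (0:ℝ) < 3 * β)).1 h2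
        nlinarith
      have h5 : (2 * Real.sqrt (-(α ^ 2 + 3 * β * δ))) ^ 2 < (3 * β * m) ^ 2 := by
        nlinarith
      nlinarith [h5, hs]
  refine ⟨fun m hm => omega_re_eq α β δ hβ' m (hpos m hm).le, ?_, ?_⟩
  · intro m1 h1 m2 h2 h12
    simp only [Set.mem_Ici] at h1 h2
    rw [tau_eq α β δ hβ' m1 (hpos m1 h1).le, tau_eq α β δ hβ' m2 (hpos m2 h2).le]
    set u1 := Real.sqrt (3 * β ^ 2 * m1 ^ 2 + α ^ 2 + 3 * β * δ) with hu1def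
    set u2 := Real.sqrt (3 * β ^ 2 * m2 ^ 2 + α ^ 2 + 3 * β * δ) with hu2def
    have hu1sq : u1 ^ 2 = 3 * β ^ 2 * m1 ^ 2 + α ^ 2 + 3 * β * δ :=
      Real.sq_sqrt (hpos m1 h1).le
    have hu1pos : 0 < u1 := Real.sqrt_pos.2 (hpos m1 h1)
    have hm1 : 0 ≤ m1 := hlam0.trans h1
    have hu12 : u1 < u2 := by
      apply Real.sqrt_lt_sqrt (hpos m1 h1).le
      nlinarith [mul_pos hβ hβ, mul_pos (sub_pos.2 h12) (by linarith : (0:ℝ) < m2 + m1)]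
    have hcle : α ^ 2 + 3 * β * δ ≤ u1 ^ 2 := by nlinarith [sq_nonneg (β * m1)]
    have key : 0 < 8 * (u2 ^ 2 + u1 * u2 + u1 ^ 2) - 6 * (α ^ 2 + 3 * β * δ) := by
      nlinarith [mul_pos hu1pos (sub_pos.2 hu12), sq_nonneg (u2 - u1)]
    have main : 8 * u1 ^ 3 - 6 * (α ^ 2 + 3 * β * δ) * u1
        < 8 * u2 ^ 3 - 6 * (α ^ 2 + 3 * β * δ) * u2 := by
      nlinarith [mul_pos (sub_pos.2 hu12) key]
    rw [div_lt_div_iff₀ (by positivity) (by positivity)]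
    nlinarith [main, mul_pos hβ hβ, sq_nonneg β,
      mul_lt_mul_of_pos_right main (by positivity : (0:ℝ) < 27 * β ^ 2)]
  · have hE : Filter.Tendsto (fun m : ℝ => 3 * β ^ 2 * m ^ 2 + α ^ 2 + 3 * β * δ)
        Filter.atTop Filter.atTop := by
      apply Filter.tendsto_atTop_add_const_right
      apply Filter.tendsto_atTop_add_const_right
      exact (Filter.tendsto_pow_atTop two_ne_zero).const_mul_atTop (by positivity)
    have hsqrt : Filter.Tendsto Real.sqrt Filter.atTop Filter.atTop := by
      apply Filter.tendsto_atTop_atTop.2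
      intro b
      refine ⟨b ^ 2, fun x hx => le_trans (le_abs_self b) ?_⟩
      rw [← Real.sqrt_sq_eq_abs]
      exact Real.sqrt_le_sqrt hx
    have hU : Filter.Tendsto
        (fun m : ℝ => Real.sqrt (3 * β ^ 2 * m ^ 2 + α ^ 2 + 3 * β * δ))
        Filter.atTop Filter.atTop := hsqrt.comp hE
    have hP : Filter.Tendsto
        (fun x : ℝ => 8 * x ^ 3 - 6 * (α ^ 2 + 3 * β * δ) * x + α ^ 3
          - 3 * α * (α ^ 2 + 3 * β * δ)) Filter.atTop Filter.atTop := by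
      have h1 : Filter.Tendsto (fun x : ℝ => 8 * x ^ 2 - 6 * (α ^ 2 + 3 * β * δ))
          Filter.atTop Filter.atTop := by
        apply Filter.tendsto_atTop_add_const_right
        exact (Filter.tendsto_pow_atTop two_ne_zero).const_mul_atTop (by norm_num)
      have hid : Filter.Tendsto (fun x : ℝ => x) Filter.atTop Filter.atTop :=
        Filter.tendsto_id
      have h2 := Filter.tendsto_atTop_add_const_right Filter.atTop
        (α ^ 3 - 3 * α * (α ^ 2 + 3 * β * δ))
        (hid.atTop_mul_atTop₀ h1)
      exact h2.congr (fun x => by ring)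
    have hdiv := (hP.comp hU).atTop_div_const (by positivity : (0:ℝ) < 27 * β ^ 2)
    refine hdiv.congr' ?_
    filter_upwards [Filter.eventually_ge_atTop lam] with m hm
    exact (tau_eq α β δ hβ' m (hpos m hm).le).symm
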